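/- For every g ∈ C³(ℝ) with bounded first, second, and third derivatives, and F_β(x) = β⁻¹ log(∑_j e^{β x_j}), the composite f = g ∘ F_β satisfies ∑_{j,k=1}^p |∂_j ∂_k f(x)| ≤ ‖g''‖_∞ + 2‖g'‖_∞ β and ∑_{j,k,l=1}^p |∂_j ∂_k ∂_l f(x)| ≤ ‖g'''‖_∞ + 6‖g''‖_∞ β + 6‖g'‖_∞ β² for all x ∈ ℝ^p. -/

import Mathlib

open Real Finset

namespace LSEaux
variable (β : ℝ) {p : ℕ}

def dlt {p : ℕ} (a b : Fin p) : ℝ := if a = b then 1 else 0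

noncomputable def prj (p : ℕ) (j : Fin p) : (Fin p → ℝ) →L[ℝ] ℝ := ContinuousLinearMap.proj j
noncomputable def Sf (y : Fin p → ℝ) : ℝ := ∑ j, Real.exp (β * y j)
noncomputable def piF (k : Fin p) (y : Fin p → ℝ) : ℝ := Real.exp (β * y k) / Sf β y
noncomputable def Ff (y : Fin p → ℝ) : ℝ := β⁻¹ * Real.log (Sf β y)
noncomputable def LS (y : Fin p → ℝ) : (Fin p → ℝ) →L[ℝ] ℝ :=
  ∑ j, Real.exp (β * y j) • (β • prj p j)
noncomputable def LF (y : Fin p → ℝ) : (Fin p → ℝ) →L[ℝ] ℝ :=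
  β⁻¹ • ((Sf β y)⁻¹ • LS β y)
noncomputable def Lpi (k : Fin p) (y : Fin p → ℝ) : (Fin p → ℝ) →L[ℝ] ℝ :=
  Real.exp (β * y k) • ((-((Sf β y) ^ 2)⁻¹) • LS β y)
    + ((Sf β y)⁻¹) • (Real.exp (β * y k) • (β • prj p k))

theorem Sf_pos (hp : 1 ≤ p) (y : Fin p → ℝ) : 0 < Sf β y := by
  have : Nonempty (Fin p) := Fin.pos_iff_nonempty.mp hp
  exact Finset.sum_pos (fun j _ => Real.exp_pos _) Finset.univ_nonempty

theorem prj_single (j k : Fin p) : prj p j (Pi.single k 1) = if j = k then (1:ℝ) else 0 := by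
  simp [prj, Pi.single_apply]

theorem LS_single (y : Fin p → ℝ) (j : Fin p) :
    LS β y (Pi.single j 1) = β * Real.exp (β * y j) := by
  simp only [LS, ContinuousLinearMap.sum_apply, ContinuousLinearMap.smul_apply, prj_single,
    smul_eq_mul, mul_ite, mul_one, mul_zero]
  rw [Finset.sum_ite_eq' Finset.univ j (fun i => Real.exp (β * y i) * β)]
  simp [mul_comm]

theorem LF_single (hβ : β ≠ 0) (hp : 1 ≤ p) (y : Fin p → ℝ) (j : Fin p) :
    LF β y (Pi.single j 1) = piF β j y := by
  have hS := (Sf_pos β hp y).ne'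
  simp only [LF, ContinuousLinearMap.smul_apply, LS_single, smul_eq_mul, piF]
  field_simp

theorem Lpi_single (hp : 1 ≤ p) (k : Fin p) (y : Fin p → ℝ) (j : Fin p) :
    Lpi β k y (Pi.single j 1)
      = β * piF β k y * (dlt k j - piF β j y) := by
  have hS := (Sf_pos β hp y).ne'
  simp only [Lpi, dlt, ContinuousLinearMap.add_apply, ContinuousLinearMap.smul_apply, LS_single,
    prj_single, smul_eq_mul, piF]
  split_ifs <;> field_simp <;> ring

theorem piF_nonneg (hp : 1 ≤ p) (k : Fin p) (y : Fin p → ℝ) : 0 ≤ piF β k y :=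
  div_nonneg (Real.exp_pos _).le (Sf_pos β hp y).le

theorem sum_piF (hp : 1 ≤ p) (y : Fin p → ℝ) : ∑ k, piF β k y = 1 := by
  have hS := (Sf_pos β hp y).ne'
  simp only [piF]
  rw [← Finset.sum_div]
  exact div_self hS

theorem hasFDerivAt_Sf (y : Fin p → ℝ) : HasFDerivAt (Sf β) (LS β y) y := by
  apply HasFDerivAt.fun_sum
  intro j _
  have h1 : HasFDerivAt (fun y : Fin p → ℝ => β * y j) (β • prj p j) y :=
    (prj p j).hasFDerivAt.const_mul β
  exact (Real.hasDerivAt_exp _).comp_hasFDerivAt y h1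

theorem hasFDerivAt_expf (y : Fin p → ℝ) (k : Fin p) :
    HasFDerivAt (fun y : Fin p → ℝ => Real.exp (β * y k))
      (Real.exp (β * y k) • (β • prj p k)) y :=
  (Real.hasDerivAt_exp _).comp_hasFDerivAt y ((prj p k).hasFDerivAt.const_mul β)

theorem hasFDerivAt_Ff (hp : 1 ≤ p) (y : Fin p → ℝ) : HasFDerivAt (Ff β) (LF β y) y :=
  ((hasFDerivAt_Sf β y).log (Sf_pos β hp y).ne').const_mul β⁻¹

theorem hasFDerivAt_piF (hp : 1 ≤ p) (k : Fin p) (y : Fin p → ℝ) :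
    HasFDerivAt (piF β k) (Lpi β k y) y := by
  have hinv : HasFDerivAt (fun y : Fin p → ℝ => (Sf β y)⁻¹)
      ((-((Sf β y) ^ 2)⁻¹) • LS β y) y :=
    (hasDerivAt_inv (Sf_pos β hp y).ne').comp_hasFDerivAt y (hasFDerivAt_Sf β y)
  have := (hasFDerivAt_expf β y k).fun_mul hinv
  have e : piF β k = fun i => Real.exp (β * i k) * (Sf β i)⁻¹ :=
    funext fun z => by simp only [piF, div_eq_mul_inv]
  rw [e]
  exact this

/-! ### composite derivatives -/

noncomputable def phi1 (g : ℝ → ℝ) (β : ℝ) {p : ℕ} (l : Fin p) (y : Fin p → ℝ) : ℝ :=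
  deriv g (Ff β y) * piF β l y

noncomputable def phi2 (g : ℝ → ℝ) (β : ℝ) {p : ℕ} (k l : Fin p) (y : Fin p → ℝ) : ℝ :=
  deriv (deriv g) (Ff β y) * piF β k y * piF β l y
    + deriv g (Ff β y) * (β * piF β l y * (dlt l k - piF β k y))

noncomputable def phi3 (g : ℝ → ℝ) (β : ℝ) {p : ℕ} (j k l : Fin p) (y : Fin p → ℝ) : ℝ :=
  deriv (deriv (deriv g)) (Ff β y) * piF β j y * piF β k y * piF β l y
  + deriv (deriv g) (Ff β y) * (β * piF β k y * (dlt k j - piF β j y)) * piF β l y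
  + deriv (deriv g) (Ff β y) * piF β k y * (β * piF β l y * (dlt l j - piF β j y))
  + deriv (deriv g) (Ff β y) * piF β j y * (β * piF β l y * (dlt l k - piF β k y))
  + deriv g (Ff β y) * (β * (β * piF β l y * (dlt l j - piF β j y)) * (dlt l k - piF β k y)
       + β * piF β l y * (-(β * piF β k y * (dlt k j - piF β j y))))


section claims

variable {p : ℕ} {β : ℝ} {g : ℝ → ℝ} {f : (Fin p → ℝ) → ℝ}

theorem claim1 (hp : 1 ≤ p) (hβ : β ≠ 0) (hdg : Differentiable ℝ g)
    (hf : ∀ x, f x = g (β⁻¹ * Real.log (∑ j, Real.exp (β * x j))))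
    (y : Fin p → ℝ) (l : Fin p) :
    fderiv ℝ f y (Pi.single l 1) = phi1 g β l y := by
  have hfe : f = fun y => g (Ff β y) := funext fun z => by rw [hf]; rfl
  have hd : HasFDerivAt f (deriv g (Ff β y) • LF β y) y := by
    rw [hfe]
    exact ((hdg (Ff β y)).hasDerivAt).comp_hasFDerivAt y (hasFDerivAt_Ff β hp y)
  rw [hd.fderiv]
  simp only [ContinuousLinearMap.smul_apply, smul_eq_mul, LF_single β hβ hp]
  rfl

theorem hasFDerivAt_phi1 (hp : 1 ≤ p) (hdg1 : Differentiable ℝ (deriv g))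
    (y : Fin p → ℝ) (l : Fin p) :
    HasFDerivAt (phi1 g β l)
      (deriv g (Ff β y) • Lpi β l y
        + piF β l y • (deriv (deriv g) (Ff β y) • LF β y)) y := by
  have hgF : HasFDerivAt (fun y : Fin p → ℝ => deriv g (Ff β y))
      (deriv (deriv g) (Ff β y) • LF β y) y :=
    ((hdg1 (Ff β y)).hasDerivAt).comp_hasFDerivAt y (hasFDerivAt_Ff β hp y)
  exact hgF.mul (hasFDerivAt_piF β hp l y)

theorem claim2 (hp : 1 ≤ p) (hβ : β ≠ 0) (hdg : Differentiable ℝ g)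
    (hdg1 : Differentiable ℝ (deriv g))
    (hf : ∀ x, f x = g (β⁻¹ * Real.log (∑ j, Real.exp (β * x j))))
    (y : Fin p → ℝ) (k l : Fin p) :
    fderiv ℝ (fun z => fderiv ℝ f z (Pi.single l 1)) y (Pi.single k 1) = phi2 g β k l y := by
  have he : (fun z => fderiv ℝ f z (Pi.single l 1)) = phi1 g β l :=
    funext fun z => claim1 hp hβ hdg hf z l
  rw [he, (hasFDerivAt_phi1 hp hdg1 y l).fderiv]
  simp only [ContinuousLinearMap.add_apply, ContinuousLinearMap.smul_apply, smul_eq_mul,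
    LF_single β hβ hp, Lpi_single β hp, phi2]
  ring

theorem claim3 (hp : 1 ≤ p) (hβ : β ≠ 0) (hdg : Differentiable ℝ g)
    (hdg1 : Differentiable ℝ (deriv g)) (hdg2 : Differentiable ℝ (deriv (deriv g)))
    (hf : ∀ x, f x = g (β⁻¹ * Real.log (∑ j, Real.exp (β * x j))))
    (x : Fin p → ℝ) (j k l : Fin p) :
    fderiv ℝ (fun y =>
        fderiv ℝ (fun z => fderiv ℝ f z (Pi.single l 1)) y (Pi.single k 1)) x
        (Pi.single j 1) = phi3 g β j k l x := by
  have he : (fun y => fderiv ℝ (fun z => fderiv ℝ f z (Pi.single l 1)) y (Pi.single k 1))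
      = phi2 g β k l := funext fun y => claim2 hp hβ hdg hdg1 hf y k l
  rw [he]
  have hgF : HasFDerivAt (fun y : Fin p → ℝ => deriv g (Ff β y))
      (deriv (deriv g) (Ff β x) • LF β x) x :=
    ((hdg1 (Ff β x)).hasDerivAt).comp_hasFDerivAt x (hasFDerivAt_Ff β hp x)
  have hg2F : HasFDerivAt (fun y : Fin p → ℝ => deriv (deriv g) (Ff β y))
      (deriv (deriv (deriv g)) (Ff β x) • LF β x) x :=
    ((hdg2 (Ff β x)).hasDerivAt).comp_hasFDerivAt x (hasFDerivAt_Ff β hp x)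
  have ht1 := (hg2F.fun_mul (hasFDerivAt_piF β hp k x)).fun_mul (hasFDerivAt_piF β hp l x)
  have hinner := ((hasFDerivAt_piF β hp l x).const_mul β).fun_mul
      ((hasFDerivAt_piF β hp k x).const_sub (dlt l k))
  have ht2 := hgF.fun_mul hinner
  have hbig := ht1.add ht2
  have hd : HasFDerivAt (phi2 g β k l) _ x := hbig
  rw [hd.fderiv]
  simp only [ContinuousLinearMap.add_apply, ContinuousLinearMap.smul_apply,
    ContinuousLinearMap.neg_apply, smul_eq_mul, LF_single β hβ hp, Lpi_single β hp, phi3]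
  ring

end claims

section bounds

variable {p : ℕ} {β : ℝ} {g : ℝ → ℝ}

theorem dlt_nonneg {a b : Fin p} : (0:ℝ) ≤ dlt a b := by
  unfold dlt; split_ifs <;> norm_num

theorem sum_dlt (a : Fin p) : ∑ b, dlt a b = (1:ℝ) := by
  simp [dlt, Finset.sum_ite_eq]

theorem sum_absD (hp : 1 ≤ p) (y : Fin p → ℝ) (a : Fin p) :
    ∑ b, |dlt a b - piF β b y| ≤ 2 := by
  calc ∑ b, |dlt a b - piF β b y| ≤ ∑ b, (dlt a b + piF β b y) := by
        refine Finset.sum_le_sum fun b _ => (abs_sub _ _).trans ?_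
        rw [abs_of_nonneg dlt_nonneg, abs_of_nonneg (piF_nonneg β hp b y)]
    _ = 2 := by rw [Finset.sum_add_distrib, sum_dlt, sum_piF β hp y]; norm_num

theorem phi2_bound (hp : 1 ≤ p) (hβ : 0 < β) {B₁ B₂ : ℝ}
    (hB₁ : ∀ t, |deriv g t| ≤ B₁) (hB₂ : ∀ t, |deriv (deriv g) t| ≤ B₂)
    (k l : Fin p) (y : Fin p → ℝ) :
    |phi2 g β k l y|
      ≤ B₂ * (piF β k y * piF β l y)
        + B₁ * (β * piF β l y * |dlt l k - piF β k y|) := by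
  have hπk := piF_nonneg β hp k y
  have hπl := piF_nonneg β hp l y
  have h1 : |deriv (deriv g) (Ff β y) * piF β k y * piF β l y|
      ≤ B₂ * (piF β k y * piF β l y) := by
    rw [mul_assoc, abs_mul, abs_of_nonneg (mul_nonneg hπk hπl)]
    exact mul_le_mul_of_nonneg_right (hB₂ _) (mul_nonneg hπk hπl)
  have h2 : |deriv g (Ff β y) * (β * piF β l y * (dlt l k - piF β k y))|
      ≤ B₁ * (β * piF β l y * |dlt l k - piF β k y|) := by
    rw [abs_mul, abs_mul, abs_of_nonneg (mul_nonneg hβ.le hπl)]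
    exact mul_le_mul_of_nonneg_right (hB₁ _) (by positivity)
  simp only [phi2]
  exact (abs_add_le _ _).trans (add_le_add h1 h2)

theorem part1_sum (hp : 1 ≤ p) (hβ : 0 < β) {B₁ B₂ : ℝ}
    (hB₁ : ∀ t, |deriv g t| ≤ B₁) (hB₂ : ∀ t, |deriv (deriv g) t| ≤ B₂)
    (x : Fin p → ℝ) :
    ∑ j, ∑ k, |phi2 g β j k x| ≤ B₂ + 2 * B₁ * β := by
  have hB₁0 : 0 ≤ B₁ := le_trans (abs_nonneg _) (hB₁ 0)
  calc ∑ j, ∑ k, |phi2 g β j k x|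
      ≤ ∑ j, ∑ k, (B₂ * (piF β j x * piF β k x)
          + B₁ * (β * piF β k x * |dlt k j - piF β j x|)) :=
        Finset.sum_le_sum fun j _ => Finset.sum_le_sum fun k _ =>
          phi2_bound hp hβ hB₁ hB₂ j k x
    _ = ∑ j, ∑ k, B₂ * (piF β j x * piF β k x)
          + ∑ j, ∑ k, B₁ * (β * piF β k x * |dlt k j - piF β j x|) := by
        rw [← Finset.sum_add_distrib]
        exact Finset.sum_congr rfl fun j _ => Finset.sum_add_distrib
    _ ≤ B₂ + 2 * B₁ * β := by
        have e1 : ∑ j, ∑ k, B₂ * (piF β j x * piF β k x) = B₂ := by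
          have : ∀ j : Fin p, ∑ k, B₂ * (piF β j x * piF β k x) = B₂ * piF β j x := by
            intro j
            rw [← Finset.mul_sum, ← Finset.mul_sum, sum_piF β hp x, mul_one]
          rw [Finset.sum_congr rfl fun j _ => this j, ← Finset.mul_sum, sum_piF β hp x, mul_one]
        have e2 : ∑ j, ∑ k, B₁ * (β * piF β k x * |dlt k j - piF β j x|) ≤ 2 * B₁ * β := by
          rw [Finset.sum_comm]
          calc ∑ k, ∑ j, B₁ * (β * piF β k x * |dlt k j - piF β j x|)
              = ∑ k, (B₁ * β * piF β k x) * ∑ j, |dlt k j - piF β j x| := by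
                refine Finset.sum_congr rfl fun k _ => ?_
                rw [Finset.mul_sum]
                exact Finset.sum_congr rfl fun j _ => by ring
            _ ≤ ∑ k, (B₁ * β * piF β k x) * 2 :=
                Finset.sum_le_sum fun k _ => mul_le_mul_of_nonneg_left (sum_absD hp x k)
                  (by have := piF_nonneg β hp k x; positivity)
            _ = 2 * B₁ * β := by
                rw [← Finset.sum_mul, ← Finset.mul_sum, sum_piF β hp x]
                ring
        linarith

theorem hsum_c (hp : 1 ≤ p) (x : Fin p → ℝ) (c : ℝ) :
    ∑ l : Fin p, c * piF β l x = c := by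
  rw [← Finset.mul_sum, sum_piF β hp x, mul_one]

theorem pairD_sum (hp : 1 ≤ p) (x : Fin p → ℝ) (c : ℝ) (hc : 0 ≤ c) :
    ∑ a : Fin p, ∑ b : Fin p, c * piF β a x * |dlt a b - piF β b x| ≤ 2 * c := by
  calc ∑ a : Fin p, ∑ b : Fin p, c * piF β a x * |dlt a b - piF β b x|
      = ∑ a : Fin p, (c * piF β a x) * ∑ b : Fin p, |dlt a b - piF β b x| :=
        Finset.sum_congr rfl fun a _ => by rw [Finset.mul_sum]
    _ ≤ ∑ a : Fin p, (c * piF β a x) * 2 :=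
        Finset.sum_le_sum fun a _ => mul_le_mul_of_nonneg_left (sum_absD hp x a)
          (mul_nonneg hc (piF_nonneg β hp a x))
    _ = 2 * c := by rw [← Finset.sum_mul, ← Finset.mul_sum, sum_piF β hp x]; ring

theorem phi3_bound (hp : 1 ≤ p) (hβ : 0 < β) {B₁ B₂ B₃ : ℝ}
    (hB₁ : ∀ t, |deriv g t| ≤ B₁) (hB₂ : ∀ t, |deriv (deriv g) t| ≤ B₂)
    (hB₃ : ∀ t, |deriv (deriv (deriv g)) t| ≤ B₃)
    (j k l : Fin p) (y : Fin p → ℝ) :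
    |phi3 g β j k l y|
      ≤ B₃ * (piF β j y * (piF β k y * piF β l y))
        + B₂ * ((β * (piF β k y * piF β l y)) * |dlt k j - piF β j y|)
        + B₂ * ((β * (piF β k y * piF β l y)) * |dlt l j - piF β j y|)
        + B₂ * ((β * (piF β j y * piF β l y)) * |dlt l k - piF β k y|)
        + (B₁ * ((β ^ 2 * piF β l y) * (|dlt l j - piF β j y| * |dlt l k - piF β k y|))
            + B₁ * ((β ^ 2 * (piF β k y * piF β l y)) * |dlt k j - piF β j y|)) := by
  have hB₁0 : 0 ≤ B₁ := le_trans (abs_nonneg _) (hB₁ 0)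
  have hπj := piF_nonneg β hp j y
  have hπk := piF_nonneg β hp k y
  have hπl := piF_nonneg β hp l y
  have hβ0 := hβ.le
  have reshape : phi3 g β j k l y
      = deriv (deriv (deriv g)) (Ff β y) * (piF β j y * (piF β k y * piF β l y))
        + deriv (deriv g) (Ff β y) * ((β * (piF β k y * piF β l y)) * (dlt k j - piF β j y))
        + deriv (deriv g) (Ff β y) * ((β * (piF β k y * piF β l y)) * (dlt l j - piF β j y))
        + deriv (deriv g) (Ff β y) * ((β * (piF β j y * piF β l y)) * (dlt l k - piF β k y))
        + deriv g (Ff β y) *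
            ((β ^ 2 * piF β l y) * ((dlt l j - piF β j y) * (dlt l k - piF β k y))
              - (β ^ 2 * (piF β k y * piF β l y)) * (dlt k j - piF β j y)) := by
    simp only [phi3]; ring
  rw [reshape]
  have h1 : |deriv (deriv (deriv g)) (Ff β y) * (piF β j y * (piF β k y * piF β l y))|
      ≤ B₃ * (piF β j y * (piF β k y * piF β l y)) := by
    rw [abs_mul,
      abs_of_nonneg (by positivity : (0:ℝ) ≤ piF β j y * (piF β k y * piF β l y))]
    exact mul_le_mul_of_nonneg_right (hB₃ _) (by positivity)
  have h2 : |deriv (deriv g) (Ff β y) * ((β * (piF β k y * piF β l y)) * (dlt k j - piF β j y))|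
      ≤ B₂ * ((β * (piF β k y * piF β l y)) * |dlt k j - piF β j y|) := by
    rw [abs_mul, abs_mul, abs_of_nonneg (by positivity : (0:ℝ) ≤ β * (piF β k y * piF β l y))]
    exact mul_le_mul_of_nonneg_right (hB₂ _) (by positivity)
  have h3 : |deriv (deriv g) (Ff β y) * ((β * (piF β k y * piF β l y)) * (dlt l j - piF β j y))|
      ≤ B₂ * ((β * (piF β k y * piF β l y)) * |dlt l j - piF β j y|) := by
    rw [abs_mul, abs_mul, abs_of_nonneg (by positivity : (0:ℝ) ≤ β * (piF β k y * piF β l y))]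
    exact mul_le_mul_of_nonneg_right (hB₂ _) (by positivity)
  have h4 : |deriv (deriv g) (Ff β y) * ((β * (piF β j y * piF β l y)) * (dlt l k - piF β k y))|
      ≤ B₂ * ((β * (piF β j y * piF β l y)) * |dlt l k - piF β k y|) := by
    rw [abs_mul, abs_mul, abs_of_nonneg (by positivity : (0:ℝ) ≤ β * (piF β j y * piF β l y))]
    exact mul_le_mul_of_nonneg_right (hB₂ _) (by positivity)
  have h5 : |deriv g (Ff β y) *
        ((β ^ 2 * piF β l y) * ((dlt l j - piF β j y) * (dlt l k - piF β k y))
          - (β ^ 2 * (piF β k y * piF β l y)) * (dlt k j - piF β j y))|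
      ≤ B₁ * ((β ^ 2 * piF β l y) * (|dlt l j - piF β j y| * |dlt l k - piF β k y|))
          + B₁ * ((β ^ 2 * (piF β k y * piF β l y)) * |dlt k j - piF β j y|) := by
    rw [← mul_add, abs_mul]
    refine mul_le_mul (hB₁ _) ?_ (abs_nonneg _) hB₁0
    refine (abs_sub _ _).trans (le_of_eq ?_)
    simp only [abs_mul]
    rw [abs_of_nonneg (sq_nonneg β), abs_of_nonneg hπl, abs_of_nonneg hπk]
  exact (abs_add_le _ _).trans (add_le_add ((abs_add_le _ _).trans (add_le_add
    ((abs_add_le _ _).trans (add_le_add ((abs_add_le _ _).trans (add_le_add h1 h2)) h3)) h4)) h5)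

theorem part2_sum (hp : 1 ≤ p) (hβ : 0 < β) {B₁ B₂ B₃ : ℝ}
    (hB₁ : ∀ t, |deriv g t| ≤ B₁) (hB₂ : ∀ t, |deriv (deriv g) t| ≤ B₂)
    (hB₃ : ∀ t, |deriv (deriv (deriv g)) t| ≤ B₃)
    (x : Fin p → ℝ) :
    ∑ j, ∑ k, ∑ l, |phi3 g β j k l x| ≤ B₃ + 6 * B₂ * β + 6 * B₁ * β ^ 2 := by
  have hB₁0 : 0 ≤ B₁ := le_trans (abs_nonneg _) (hB₁ 0)
  have hB₂0 : 0 ≤ B₂ := le_trans (abs_nonneg _) (hB₂ 0)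
  have hβ0 := hβ.le
  have Hbd := fun (j k l : Fin p) => phi3_bound hp hβ hB₁ hB₂ hB₃ j k l x
  calc ∑ j, ∑ k, ∑ l, |phi3 g β j k l x|
      ≤ ∑ j, ∑ k, ∑ l,
          (B₃ * (piF β j x * (piF β k x * piF β l x))
          + B₂ * ((β * (piF β k x * piF β l x)) * |dlt k j - piF β j x|)
          + B₂ * ((β * (piF β k x * piF β l x)) * |dlt l j - piF β j x|)
          + B₂ * ((β * (piF β j x * piF β l x)) * |dlt l k - piF β k x|)
          + (B₁ * ((β ^ 2 * piF β l x) * (|dlt l j - piF β j x| * |dlt l k - piF β k x|))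
              + B₁ * ((β ^ 2 * (piF β k x * piF β l x)) * |dlt k j - piF β j x|))) :=
        Finset.sum_le_sum fun j _ => Finset.sum_le_sum fun k _ =>
          Finset.sum_le_sum fun l _ => Hbd j k l
    _ = (∑ j, ∑ k, ∑ l, B₃ * (piF β j x * (piF β k x * piF β l x)))
          + (∑ j, ∑ k, ∑ l, B₂ * ((β * (piF β k x * piF β l x)) * |dlt k j - piF β j x|))
          + (∑ j, ∑ k, ∑ l, B₂ * ((β * (piF β k x * piF β l x)) * |dlt l j - piF β j x|))
          + (∑ j, ∑ k, ∑ l, B₂ * ((β * (piF β j x * piF β l x)) * |dlt l k - piF β k x|))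
          + ((∑ j, ∑ k, ∑ l, B₁ * ((β ^ 2 * piF β l x) * (|dlt l j - piF β j x| * |dlt l k - piF β k x|)))
          + (∑ j, ∑ k, ∑ l, B₁ * ((β ^ 2 * (piF β k x * piF β l x)) * |dlt k j - piF β j x|))) := by
        simp only [Finset.sum_add_distrib]
    _ ≤ B₃ + 6 * B₂ * β + 6 * B₁ * β ^ 2 := by
        have e1 : ∑ j : Fin p, ∑ k : Fin p, ∑ l : Fin p,
            B₃ * (piF β j x * (piF β k x * piF β l x)) = B₃ := by
          have h1 : ∀ j k : Fin p, ∑ l : Fin p, B₃ * (piF β j x * (piF β k x * piF β l x))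
              = B₃ * (piF β j x * piF β k x) := fun j k => by
            rw [Finset.sum_congr rfl fun l _ =>
              (by ring : B₃ * (piF β j x * (piF β k x * piF β l x))
                = (B₃ * (piF β j x * piF β k x)) * piF β l x), hsum_c hp x]
          rw [Finset.sum_congr rfl fun j _ => Finset.sum_congr rfl fun k _ => h1 j k]
          have h2 : ∀ j : Fin p, ∑ k : Fin p, B₃ * (piF β j x * piF β k x)
              = B₃ * piF β j x := fun j => by
            rw [Finset.sum_congr rfl fun k _ =>
              (by ring : B₃ * (piF β j x * piF β k x) = (B₃ * piF β j x) * piF β k x),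
              hsum_c hp x]
          rw [Finset.sum_congr rfl fun j _ => h2 j, hsum_c hp x]
        have e2 : ∑ j : Fin p, ∑ k : Fin p, ∑ l : Fin p,
            B₂ * ((β * (piF β k x * piF β l x)) * |dlt k j - piF β j x|) ≤ 2 * (B₂ * β) := by
          have h1 : ∀ j k : Fin p, ∑ l : Fin p,
              B₂ * ((β * (piF β k x * piF β l x)) * |dlt k j - piF β j x|)
              = B₂ * β * piF β k x * |dlt k j - piF β j x| := fun j k => by
            rw [Finset.sum_congr rfl fun l _ =>
              (by ring : B₂ * ((β * (piF β k x * piF β l x)) * |dlt k j - piF β j x|)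
                = (B₂ * β * piF β k x * |dlt k j - piF β j x|) * piF β l x), hsum_c hp x]
          rw [Finset.sum_congr rfl fun j _ => Finset.sum_congr rfl fun k _ => h1 j k,
            Finset.sum_comm]
          exact pairD_sum hp x (B₂ * β) (by positivity)
        have e3 : ∑ j : Fin p, ∑ k : Fin p, ∑ l : Fin p,
            B₂ * ((β * (piF β k x * piF β l x)) * |dlt l j - piF β j x|) ≤ 2 * (B₂ * β) := by
          have h1 : ∀ j : Fin p, ∑ k : Fin p, ∑ l : Fin p,
              B₂ * ((β * (piF β k x * piF β l x)) * |dlt l j - piF β j x|)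
              = ∑ l : Fin p, B₂ * β * piF β l x * |dlt l j - piF β j x| := fun j => by
            rw [Finset.sum_comm]
            refine Finset.sum_congr rfl fun l _ => ?_
            rw [Finset.sum_congr rfl fun k _ =>
              (by ring : B₂ * ((β * (piF β k x * piF β l x)) * |dlt l j - piF β j x|)
                = (B₂ * β * piF β l x * |dlt l j - piF β j x|) * piF β k x), hsum_c hp x]
          rw [Finset.sum_congr rfl fun j _ => h1 j, Finset.sum_comm]
          exact pairD_sum hp x (B₂ * β) (by positivity)
        have e4 : ∑ j : Fin p, ∑ k : Fin p, ∑ l : Fin p,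
            B₂ * ((β * (piF β j x * piF β l x)) * |dlt l k - piF β k x|) ≤ 2 * (B₂ * β) := by
          have h1 : ∀ j : Fin p, ∑ k : Fin p, ∑ l : Fin p,
              B₂ * ((β * (piF β j x * piF β l x)) * |dlt l k - piF β k x|)
              ≤ 2 * (B₂ * β * piF β j x) := fun j => by
            rw [Finset.sum_comm]
            have := pairD_sum (β := β) hp x (B₂ * β * piF β j x)
              (by have := piF_nonneg β hp j x; positivity)
            refine le_trans (le_of_eq ?_) this
            refine Finset.sum_congr rfl fun l _ => Finset.sum_congr rfl fun k _ => by ring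
          calc ∑ j : Fin p, ∑ k : Fin p, ∑ l : Fin p,
              B₂ * ((β * (piF β j x * piF β l x)) * |dlt l k - piF β k x|)
              ≤ ∑ j : Fin p, 2 * (B₂ * β * piF β j x) :=
                Finset.sum_le_sum fun j _ => h1 j
            _ = 2 * (B₂ * β) := by
                rw [Finset.sum_congr rfl fun j _ =>
                  (by ring : 2 * (B₂ * β * piF β j x) = (2 * (B₂ * β)) * piF β j x),
                  hsum_c hp x]
        have e5 : ∑ j : Fin p, ∑ k : Fin p, ∑ l : Fin p,
            B₁ * ((β ^ 2 * piF β l x) * (|dlt l j - piF β j x| * |dlt l k - piF β k x|))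
            ≤ 4 * (B₁ * β ^ 2) := by
          have h1 : ∀ j l : Fin p, ∑ k : Fin p,
              B₁ * ((β ^ 2 * piF β l x) * (|dlt l j - piF β j x| * |dlt l k - piF β k x|))
              ≤ 2 * (B₁ * β ^ 2) * piF β l x * |dlt l j - piF β j x| := fun j l => by
            have hc : (0:ℝ) ≤ B₁ * β ^ 2 * piF β l x * |dlt l j - piF β j x| := by
              have := piF_nonneg β hp l x; positivity
            calc ∑ k : Fin p,
                B₁ * ((β ^ 2 * piF β l x) * (|dlt l j - piF β j x| * |dlt l k - piF β k x|))
                = (B₁ * β ^ 2 * piF β l x * |dlt l j - piF β j x|) *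
                    ∑ k : Fin p, |dlt l k - piF β k x| := by
                  rw [Finset.mul_sum]
                  exact Finset.sum_congr rfl fun k _ => by ring
              _ ≤ (B₁ * β ^ 2 * piF β l x * |dlt l j - piF β j x|) * 2 :=
                  mul_le_mul_of_nonneg_left (sum_absD hp x l) hc
              _ = 2 * (B₁ * β ^ 2) * piF β l x * |dlt l j - piF β j x| := by ring
          calc ∑ j : Fin p, ∑ k : Fin p, ∑ l : Fin p,
              B₁ * ((β ^ 2 * piF β l x) * (|dlt l j - piF β j x| * |dlt l k - piF β k x|))
              = ∑ j : Fin p, ∑ l : Fin p, ∑ k : Fin p,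
                B₁ * ((β ^ 2 * piF β l x) * (|dlt l j - piF β j x| * |dlt l k - piF β k x|)) :=
                Finset.sum_congr rfl fun j _ => Finset.sum_comm
            _ ≤ ∑ j : Fin p, ∑ l : Fin p,
                2 * (B₁ * β ^ 2) * piF β l x * |dlt l j - piF β j x| :=
                Finset.sum_le_sum fun j _ => Finset.sum_le_sum fun l _ => h1 j l
            _ = ∑ l : Fin p, ∑ j : Fin p,
                2 * (B₁ * β ^ 2) * piF β l x * |dlt l j - piF β j x| := Finset.sum_comm
            _ ≤ 2 * (2 * (B₁ * β ^ 2)) := pairD_sum hp x (2 * (B₁ * β ^ 2)) (by positivity)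
            _ = 4 * (B₁ * β ^ 2) := by ring
        have e6 : ∑ j : Fin p, ∑ k : Fin p, ∑ l : Fin p,
            B₁ * ((β ^ 2 * (piF β k x * piF β l x)) * |dlt k j - piF β j x|)
            ≤ 2 * (B₁ * β ^ 2) := by
          have h1 : ∀ j k : Fin p, ∑ l : Fin p,
              B₁ * ((β ^ 2 * (piF β k x * piF β l x)) * |dlt k j - piF β j x|)
              = B₁ * β ^ 2 * piF β k x * |dlt k j - piF β j x| := fun j k => by
            rw [Finset.sum_congr rfl fun l _ =>
              (by ring : B₁ * ((β ^ 2 * (piF β k x * piF β l x)) * |dlt k j - piF β j x|)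
                = (B₁ * β ^ 2 * piF β k x * |dlt k j - piF β j x|) * piF β l x), hsum_c hp x]
          rw [Finset.sum_congr rfl fun j _ => Finset.sum_congr rfl fun k _ => h1 j k,
            Finset.sum_comm]
          exact pairD_sum hp x (B₁ * β ^ 2) (by positivity)
        linarith
end bounds
end LSEaux

/-- Bounds on the sums of second and third partial derivatives of `g ∘ F_β`, where
`F_β(x) = β⁻¹ log (∑_j e^{β x_j})` and `g ∈ C³(ℝ)` has bounded derivatives. -/
theorem sum_abs_partial_derivs_comp_logSumExp
    (p : ℕ) (hp : 1 ≤ p) (β : ℝ) (hβ : 0 < β)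
    (g : ℝ → ℝ) (hg : ContDiff ℝ 3 g)
    (B₁ B₂ B₃ : ℝ)
    (hB₁ : ∀ t : ℝ, |deriv g t| ≤ B₁)
    (hB₂ : ∀ t : ℝ, |deriv (deriv g) t| ≤ B₂)
    (hB₃ : ∀ t : ℝ, |deriv (deriv (deriv g)) t| ≤ B₃)
    (f : (Fin p → ℝ) → ℝ)
    (hf : ∀ x, f x = g (β⁻¹ * Real.log (∑ j, Real.exp (β * x j))))
    (x : Fin p → ℝ) :
    (∑ j, ∑ k,
        |fderiv ℝ (fun y => fderiv ℝ f y (Pi.single k 1)) x (Pi.single j 1)|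
      ≤ B₂ + 2 * B₁ * β) ∧
    (∑ j, ∑ k, ∑ l,
        |fderiv ℝ (fun y =>
            fderiv ℝ (fun z => fderiv ℝ f z (Pi.single l 1)) y (Pi.single k 1)) x
          (Pi.single j 1)|
      ≤ B₃ + 6 * B₂ * β + 6 * B₁ * β ^ 2) := by
  have hβ' : β ≠ 0 := hβ.ne'
  have h3 : ContDiff ℝ ((2:ℕ) + 1) g := by exact_mod_cast hg
  have h2 : ContDiff ℝ ((1:ℕ) + 1) (deriv g) := by
    exact_mod_cast (contDiff_succ_iff_deriv.mp h3).2.2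
  have h1c : ContDiff ℝ ((0:ℕ) + 1) (deriv (deriv g)) := by
    exact_mod_cast (contDiff_succ_iff_deriv.mp h2).2.2
  have hdg : Differentiable ℝ g := (contDiff_succ_iff_deriv.mp h3).1
  have hdg1 : Differentiable ℝ (deriv g) := (contDiff_succ_iff_deriv.mp h2).1
  have hdg2 : Differentiable ℝ (deriv (deriv g)) := (contDiff_succ_iff_deriv.mp h1c).1
  constructor
  · refine le_trans (le_of_eq ?_) (LSEaux.part1_sum hp hβ hB₁ hB₂ x)
    refine Finset.sum_congr rfl fun j _ => Finset.sum_congr rfl fun k _ => ?_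
    rw [LSEaux.claim2 hp hβ' hdg hdg1 hf x j k]
  · refine le_trans (le_of_eq ?_) (LSEaux.part2_sum hp hβ hB₁ hB₂ hB₃ x)
    refine Finset.sum_congr rfl fun j _ => Finset.sum_congr rfl fun k _ =>
      Finset.sum_congr rfl fun l _ => ?_
    rw [LSEaux.claim3 hp hβ' hdg hdg1 hdg2 hf x j k l]
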